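/- Let X_t and X⋆ be n₁×n₂ matrices of rank r with compact SVDs X_t = U_t Σ_t V_tᵀ and X⋆ = U⋆ Σ⋆ V⋆ᵀ. If ‖X_t − X⋆‖ < σ_r(X⋆), then ‖P_{U⋆}^⊥ X_t P_{V⋆}^⊥‖_F ≤ ‖X_t − X⋆‖_F² / σ_r(X⋆), where P_{U⋆}^⊥ = I − U⋆U⋆ᵀ and P_{V⋆}^⊥ = I − V⋆V⋆ᵀ. -/

import Mathlib

open Matrix

/-- The spectral (ℓ²-operator) norm of a real matrix. -/
noncomputable def specNorm {m n : ℕ} (M : Matrix (Fin m) (Fin n) ℝ) : ℝ :=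
  ‖LinearMap.toContinuousLinearMap (Matrix.toEuclideanLin M)‖

/-- The Frobenius norm of a real matrix. -/
noncomputable def frobNorm {m n : ℕ} (M : Matrix (Fin m) (Fin n) ℝ) : ℝ :=
  Real.sqrt (∑ i, ∑ j, (M i j) ^ 2)

namespace Stmt12

noncomputable def qv {n : ℕ} (x : Fin n → ℝ) : ℝ := ∑ i, x i ^ 2

noncomputable def qm {m n : ℕ} (M : Matrix (Fin m) (Fin n) ℝ) : ℝ := ∑ i, ∑ j, M i j ^ 2

lemma qv_nonneg {n : ℕ} (x : Fin n → ℝ) : 0 ≤ qv x :=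
  Finset.sum_nonneg fun _ _ => sq_nonneg _

lemma qm_nonneg {m n : ℕ} (M : Matrix (Fin m) (Fin n) ℝ) : 0 ≤ qm M :=
  Finset.sum_nonneg fun _ _ => Finset.sum_nonneg fun _ _ => sq_nonneg _

lemma frob_eq_qm {m n : ℕ} (M : Matrix (Fin m) (Fin n) ℝ) :
    frobNorm M = Real.sqrt (qm M) := rfl

lemma qv_eq_dot {n : ℕ} (x : Fin n → ℝ) : qv x = x ⬝ᵥ x := by
  simp [qv, dotProduct, sq]

lemma qv_eq_zero {n : ℕ} {x : Fin n → ℝ} (h : qv x = 0) : x = 0 := by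
  have := (Finset.sum_eq_zero_iff_of_nonneg (fun i _ => sq_nonneg (x i))).1 h
  funext i
  have := this i (Finset.mem_univ i)
  simpa [pow_eq_zero_iff] using this

lemma qm_transpose {m n : ℕ} (M : Matrix (Fin m) (Fin n) ℝ) : qm Mᵀ = qm M := by
  rw [qm, qm, Finset.sum_comm]
  simp [Matrix.transpose_apply]

lemma dot_sq_le {n : ℕ} (x y : Fin n → ℝ) : (x ⬝ᵥ y) ^ 2 ≤ qv x * qv y := by
  simpa [qv, dotProduct] using Finset.sum_mul_sq_le_sq_mul_sq Finset.univ x y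

lemma qv_sub {n : ℕ} (x y : Fin n → ℝ) :
    qv (x - y) = qv x - 2 * (x ⬝ᵥ y) + qv y := by
  simp only [qv, dotProduct, Pi.sub_apply, Finset.mul_sum, ← Finset.sum_add_distrib,
    ← Finset.sum_sub_distrib]
  congr 1; funext i; ring

lemma dot_mulVec_self {m n : ℕ} (A : Matrix (Fin m) (Fin n) ℝ) (x : Fin n → ℝ) :
    (A *ᵥ x) ⬝ᵥ (A *ᵥ x) = x ⬝ᵥ ((Aᵀ * A) *ᵥ x) := by
  rw [dotProduct_mulVec, ← mulVec_transpose, mulVec_mulVec, dotProduct_comm]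

lemma isometry_qv {n r : ℕ} {V : Matrix (Fin n) (Fin r) ℝ} (hV : Vᵀ * V = 1)
    (x : Fin r → ℝ) : qv (V *ᵥ x) = qv x := by
  rw [qv_eq_dot, qv_eq_dot, dot_mulVec_self, hV, one_mulVec]

lemma coisometry_qv {m r : ℕ} {U : Matrix (Fin m) (Fin r) ℝ} (hU : Uᵀ * U = 1)
    (z : Fin m → ℝ) : qv (Uᵀ *ᵥ z) ≤ qv z := by
  set w := Uᵀ *ᵥ z with hw
  set p := U *ᵥ w with hp
  have hpw : qv p = qv w := isometry_qv hU w
  have hpz : p ⬝ᵥ z = qv w := by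
    rw [hp, dotProduct_comm, dotProduct_mulVec, ← mulVec_transpose, ← hw, qv_eq_dot]
  have h0 : 0 ≤ qv (z - p) := qv_nonneg _
  rw [qv_sub, dotProduct_comm, hpz, hpw] at h0
  linarith

/-- spectral-norm bound for `mulVec`, stated via sums of squares. -/
def opb {m n : ℕ} (s : ℝ) (M : Matrix (Fin m) (Fin n) ℝ) : Prop :=
  ∀ x, qv (M *ᵥ x) ≤ s ^ 2 * qv x

lemma norm_euclidean {n : ℕ} (y : Fin n → ℝ) :
    ‖(WithLp.equiv 2 (Fin n → ℝ)).symm y‖ = Real.sqrt (qv y) := by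
  rw [EuclideanSpace.norm_eq]
  simp [qv, Real.norm_eq_abs, sq_abs]

lemma opb_spec {m n : ℕ} (M : Matrix (Fin m) (Fin n) ℝ) : opb (specNorm M) M := by
  intro x
  have h := (LinearMap.toContinuousLinearMap (Matrix.toEuclideanLin M)).le_opNorm
    ((WithLp.equiv 2 (Fin n → ℝ)).symm x)
  have happ : (LinearMap.toContinuousLinearMap (Matrix.toEuclideanLin M))
      ((WithLp.equiv 2 (Fin n → ℝ)).symm x)
      = (WithLp.equiv 2 (Fin m → ℝ)).symm (M *ᵥ x) := by
    simp [LinearMap.coe_toContinuousLinearMap']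
  rw [happ, norm_euclidean, norm_euclidean] at h
  have h0 : (0:ℝ) ≤ specNorm M := norm_nonneg _
  have h1 : Real.sqrt (qv (M *ᵥ x)) ≤ specNorm M * Real.sqrt (qv x) := h
  have h2 := Real.sq_sqrt (qv_nonneg (M *ᵥ x))
  have h3 := Real.sq_sqrt (qv_nonneg x)
  nlinarith [Real.sqrt_nonneg (qv (M *ᵥ x)), Real.sqrt_nonneg (qv x)]

lemma qv_mulVec_le_qm_mul {m n : ℕ} (M : Matrix (Fin m) (Fin n) ℝ) (x : Fin n → ℝ) :
    qv (M *ᵥ x) ≤ qm M * qv x := by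
  rw [qv, qm, Finset.sum_mul]
  refine Finset.sum_le_sum fun i _ => ?_
  simpa [Matrix.mulVec, dotProduct, qv] using
    Finset.sum_mul_sq_le_sq_mul_sq Finset.univ (fun j => M i j) x

lemma spec_le_frob {m n : ℕ} (M : Matrix (Fin m) (Fin n) ℝ) :
    specNorm M ≤ frobNorm M := by
  refine ContinuousLinearMap.opNorm_le_bound _ (Real.sqrt_nonneg _) fun v => ?_
  have hv : v = (WithLp.equiv 2 (Fin n → ℝ)).symm (fun i => v i) := rfl
  have happ : (LinearMap.toContinuousLinearMap (Matrix.toEuclideanLin M)) v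
      = (WithLp.equiv 2 (Fin m → ℝ)).symm (M *ᵥ (fun i => v i)) := by
    rw [hv]; simp [LinearMap.coe_toContinuousLinearMap', Matrix.toEuclideanLin_apply]
  rw [happ, norm_euclidean]
  have hv' : ‖v‖ = Real.sqrt (qv (fun i => v i)) := norm_euclidean (fun i => v i)
  rw [hv', frob_eq_qm, ← Real.sqrt_mul (qm_nonneg M)]
  exact Real.sqrt_le_sqrt (qv_mulVec_le_qm_mul M _)

lemma opb_transpose {m n : ℕ} {s : ℝ} {M : Matrix (Fin m) (Fin n) ℝ}
    (hs : 0 ≤ s) (h : opb s M) : opb s Mᵀ := by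
  intro x
  set y := Mᵀ *ᵥ x with hy
  have key : qv y = x ⬝ᵥ (M *ᵥ y) := by
    rw [qv_eq_dot, hy, mulVec_transpose, dotProduct_comm, dotProduct_mulVec]
  have h1 : (x ⬝ᵥ (M *ᵥ y)) ^ 2 ≤ qv x * qv (M *ᵥ y) := dot_sq_le _ _
  have h2 : qv (M *ᵥ y) ≤ s ^ 2 * qv y := h y
  have h3 : qv y ^ 2 ≤ qv x * (s ^ 2 * qv y) := by
    calc qv y ^ 2 = (x ⬝ᵥ (M *ᵥ y)) ^ 2 := by rw [key]
      _ ≤ qv x * qv (M *ᵥ y) := h1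
      _ ≤ qv x * (s ^ 2 * qv y) := mul_le_mul_of_nonneg_left h2 (qv_nonneg x)
  rcases eq_or_lt_of_le (qv_nonneg y) with h4 | h4
  · have := mul_nonneg (sq_nonneg s) (qv_nonneg x)
    linarith [h4]
  · nlinarith [h3, h4]

lemma qm_comm {m n : ℕ} (M : Matrix (Fin m) (Fin n) ℝ) :
    qm M = ∑ j, ∑ i, M i j ^ 2 := by rw [qm]; exact Finset.sum_comm


lemma opb_qm_left {m n p : ℕ} {s : ℝ} {W : Matrix (Fin m) (Fin n) ℝ}
    (h : opb s W) (N : Matrix (Fin n) (Fin p) ℝ) : qm (W * N) ≤ s ^ 2 * qm N := by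
  rw [qm_comm (W * N), qm_comm N, Finset.mul_sum]
  refine Finset.sum_le_sum fun j _ => ?_
  have := h (fun k => N k j)
  simpa [qv, Matrix.mulVec, Matrix.mul_apply, dotProduct] using this

lemma opb_qm_right {m n p : ℕ} {s : ℝ} {W : Matrix (Fin n) (Fin p) ℝ}
    (h : opb s Wᵀ) (M : Matrix (Fin m) (Fin n) ℝ) : qm (M * W) ≤ s ^ 2 * qm M := by
  have h1 : qm ((M * W)ᵀ) ≤ s ^ 2 * qm Mᵀ := by
    rw [Matrix.transpose_mul]; exact opb_qm_left h Mᵀ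
  rwa [qm_transpose, qm_transpose] at h1

lemma qm_mul_le {m n p : ℕ} (A : Matrix (Fin m) (Fin n) ℝ) (B : Matrix (Fin n) (Fin p) ℝ) :
    qm (A * B) ≤ qm A * qm B := by
  calc qm (A * B) = ∑ i, ∑ j, ((A * B) i j) ^ 2 := rfl
    _ ≤ ∑ i, ∑ j, (∑ k, A i k ^ 2) * (∑ k, B k j ^ 2) := by
        refine Finset.sum_le_sum fun i _ => Finset.sum_le_sum fun j _ => ?_
        simpa [Matrix.mul_apply] using
          Finset.sum_mul_sq_le_sq_mul_sq Finset.univ (fun k => A i k) (fun k => B k j)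
    _ = ∑ i, (∑ k, A i k ^ 2) * (∑ j, ∑ k, B k j ^ 2) := by
        refine Finset.sum_congr rfl fun i _ => ?_
        rw [Finset.mul_sum]
    _ = qm A * qm B := by rw [← Finset.sum_mul, ← qm_comm B]; rfl



lemma le_of_sq_le_sq {x y : ℝ} (hy : 0 ≤ y) (h : x ^ 2 ≤ y ^ 2) : x ≤ y := by
  by_contra hxy
  push_neg at hxy
  nlinarith

lemma qm_cols {m n : ℕ} (M : Matrix (Fin m) (Fin n) ℝ) :
    qm M = ∑ j, qv (fun i => M i j) := by
  rw [qm_comm]; rfl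

lemma qm_mul_cols {m n p : ℕ} (W : Matrix (Fin m) (Fin n) ℝ) (M : Matrix (Fin n) (Fin p) ℝ) :
    qm (W * M) = ∑ j, qv (W *ᵥ (fun k => M k j)) := by
  rw [qm_cols]
  refine Finset.sum_congr rfl fun j _ => ?_
  simp [qv, Matrix.mul_apply, Matrix.mulVec, dotProduct]

lemma low_qm_left {m p : ℕ} {c : ℝ} {W : Matrix (Fin m) (Fin m) ℝ}
    (h : ∀ x, c ^ 2 * qv (W *ᵥ x) ≤ qv x) (N : Matrix (Fin m) (Fin p) ℝ) :
    c ^ 2 * qm (W * N) ≤ qm N := by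
  rw [qm_mul_cols, qm_cols N, Finset.mul_sum]
  exact Finset.sum_le_sum fun j _ => h _

lemma pyth_vec {m r : ℕ} {U : Matrix (Fin m) (Fin r) ℝ} (hU : Uᵀ * U = 1)
    (z : Fin m → ℝ) : qv z = qv (Uᵀ *ᵥ z) + qv ((1 - U * Uᵀ) *ᵥ z) := by
  set w := Uᵀ *ᵥ z with hw
  set p := U *ᵥ w with hp
  have h1 : (1 - U * Uᵀ) *ᵥ z = z - p := by
    rw [Matrix.sub_mulVec, one_mulVec, hp, hw, mulVec_mulVec]
  have hpw : qv p = qv w := isometry_qv hU w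
  have hpz : p ⬝ᵥ z = qv w := by
    rw [hp, dotProduct_comm, dotProduct_mulVec, ← mulVec_transpose, ← hw, qv_eq_dot]
  have h2 : qv (z - p) = qv z - qv w := by
    rw [qv_sub, dotProduct_comm, hpz, hpw]; ring
  rw [h1, h2]; ring

lemma row_split {m n r : ℕ} {U : Matrix (Fin m) (Fin r) ℝ} (hU : Uᵀ * U = 1)
    (M : Matrix (Fin m) (Fin n) ℝ) :
    qm M = qm (Uᵀ * M) + qm ((1 - U * Uᵀ) * M) := by
  rw [qm_mul_cols, qm_mul_cols, qm_cols, ← Finset.sum_add_distrib]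
  exact Finset.sum_congr rfl fun j _ => pyth_vec hU _

lemma col_split {m n r : ℕ} {V : Matrix (Fin n) (Fin r) ℝ} (hV : Vᵀ * V = 1)
    (M : Matrix (Fin m) (Fin n) ℝ) :
    qm M = qm (M * V) + qm (M * (1 - V * Vᵀ)) := by
  have hPt : (1 - V * Vᵀ)ᵀ = 1 - V * Vᵀ := by
    rw [Matrix.transpose_sub, Matrix.transpose_one, Matrix.transpose_mul,
      Matrix.transpose_transpose]
  have h := row_split hV Mᵀ
  rw [qm_transpose] at h
  rw [h]
  congr 1
  · rw [← qm_transpose (M * V), Matrix.transpose_mul]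
  · rw [← qm_transpose (M * (1 - V * Vᵀ)), Matrix.transpose_mul, hPt]

lemma diag_lower {r : ℕ} (σ : Fin r → ℝ) (sr : ℝ) (h0 : 0 ≤ sr) (hs : ∀ i, sr ≤ σ i)
    (y : Fin r → ℝ) : sr ^ 2 * qv y ≤ qv (Matrix.diagonal σ *ᵥ y) := by
  rw [qv, qv, Finset.mul_sum]
  refine Finset.sum_le_sum fun i _ => ?_
  rw [mulVec_diagonal]
  have h1 : sr ^ 2 ≤ σ i ^ 2 := pow_le_pow_left₀ h0 (hs i) 2
  calc sr ^ 2 * y i ^ 2 ≤ σ i ^ 2 * y i ^ 2 := mul_le_mul_of_nonneg_right h1 (sq_nonneg _)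
    _ = (σ i * y i) ^ 2 := by ring

lemma lower_bound_add {r : ℕ} {D E : Matrix (Fin r) (Fin r) ℝ} {c δ : ℝ} (hδ0 : 0 ≤ δ)
    (hc : δ ≤ c) (hD : ∀ y, c ^ 2 * qv y ≤ qv (D *ᵥ y)) (hE : opb δ E) :
    ∀ y, (c - δ) ^ 2 * qv y ≤ qv ((D + E) *ᵥ y) := by
  intro y
  have hc0 : 0 ≤ c := le_trans hδ0 hc
  set τ := Real.sqrt (qv y) with hτdef
  have hτ : τ ^ 2 = qv y := Real.sq_sqrt (qv_nonneg y)
  have hτ0 : 0 ≤ τ := Real.sqrt_nonneg _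
  set α := Real.sqrt (qv ((D + E) *ᵥ y)) with hαdef
  have hα : α ^ 2 = qv ((D + E) *ᵥ y) := Real.sq_sqrt (qv_nonneg _)
  have hα0 : 0 ≤ α := Real.sqrt_nonneg _
  set β := Real.sqrt (qv (E *ᵥ y)) with hβdef
  have hβ : β ^ 2 = qv (E *ᵥ y) := Real.sq_sqrt (qv_nonneg _)
  have hβ0 : 0 ≤ β := Real.sqrt_nonneg _
  set γ := Real.sqrt (qv (D *ᵥ y)) with hγdef
  have hγ : γ ^ 2 = qv (D *ᵥ y) := Real.sq_sqrt (qv_nonneg _)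
  have hγ0 : 0 ≤ γ := Real.sqrt_nonneg _
  -- β ≤ δ τ
  have hβτ : β ≤ δ * τ := by
    refine le_of_sq_le_sq (mul_nonneg hδ0 hτ0) ?_
    rw [hβ, mul_pow, hτ]
    exact hE y
  -- c τ ≤ γ
  have hcτ : c * τ ≤ γ := by
    refine le_of_sq_le_sq hγ0 ?_
    rw [hγ, mul_pow, hτ]
    exact hD y
  -- γ ≤ α + β
  have hsplit : D *ᵥ y = (D + E) *ᵥ y - E *ᵥ y := by
    rw [Matrix.add_mulVec]; abel
  have hdot : ((D + E) *ᵥ y) ⬝ᵥ (E *ᵥ y) ≥ -(α * β) := by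
    have h1 := dot_sq_le ((D + E) *ᵥ y) (E *ᵥ y)
    rw [← hα, ← hβ] at h1
    nlinarith [mul_nonneg hα0 hβ0]
  have hγab : γ ≤ α + β := by
    refine le_of_sq_le_sq (by linarith) ?_
    rw [hγ, hsplit, qv_sub, ← hα, ← hβ]
    nlinarith [hdot]
  -- conclude
  have hfin : (c - δ) * τ ≤ α := by nlinarith
  calc (c - δ) ^ 2 * qv y = ((c - δ) * τ) ^ 2 := by rw [mul_pow, hτ]
    _ ≤ α ^ 2 := by nlinarith [mul_nonneg (by linarith : (0:ℝ) ≤ c - δ) hτ0]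
    _ = qv ((D + E) *ᵥ y) := hα

lemma inv_lower {r : ℕ} {B : Matrix (Fin r) (Fin r) ℝ} {c : ℝ} (hc : 0 < c)
    (hlow : ∀ y, c ^ 2 * qv y ≤ qv (B *ᵥ y)) :
    IsUnit B ∧ ∀ x, c ^ 2 * qv (B⁻¹ *ᵥ x) ≤ qv x := by
  have hinj : Function.Injective B.mulVec := by
    intro a b hab
    have h0 : B *ᵥ (a - b) = 0 := by rw [mulVec_sub, hab, sub_self]
    have h1 := hlow (a - b)
    rw [h0] at h1
    have h2 : qv (0 : Fin r → ℝ) = 0 := by simp [qv]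
    rw [h2] at h1
    have h3 : qv (a - b) = 0 :=
      le_antisymm (by nlinarith [mul_pos hc hc, qv_nonneg (a - b)]) (qv_nonneg _)
    exact sub_eq_zero.1 (qv_eq_zero h3)
  have hU : IsUnit B := mulVec_injective_iff_isUnit.1 hinj
  refine ⟨hU, fun x => ?_⟩
  have hBB : B * B⁻¹ = 1 := Matrix.mul_nonsing_inv B ((Matrix.isUnit_iff_isUnit_det B).1 hU)
  have h4 : B *ᵥ (B⁻¹ *ᵥ x) = x := by rw [mulVec_mulVec, hBB, one_mulVec]
  have h5 := hlow (B⁻¹ *ᵥ x)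
  rwa [h4] at h5

lemma rank_factor {n₁ n₂ r : ℕ} (Xt : Matrix (Fin n₁) (Fin n₂) ℝ) (hXt : Xt.rank = r)
    (Us : Matrix (Fin n₁) (Fin r) ℝ) (Vs : Matrix (Fin n₂) (Fin r) ℝ)
    (hB : IsUnit (Usᵀ * Xt * Vs)) :
    Xt = (Xt * Vs) * (Usᵀ * Xt * Vs)⁻¹ * (Usᵀ * Xt) := by
  have hrB : (Usᵀ * Xt * Vs).rank = r := by
    rw [Matrix.rank_of_isUnit _ hB]; simp
  have hr1 : (Xt * Vs).rank ≤ r := hXt ▸ Matrix.rank_mul_le_left Xt Vs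
  have hr2 : r ≤ (Xt * Vs).rank := by
    have h : (Usᵀ * Xt * Vs).rank ≤ (Xt * Vs).rank := by
      rw [Matrix.mul_assoc]
      exact Matrix.rank_mul_le_right _ _
    omega
  have hsub : LinearMap.range (Xt * Vs).mulVecLin ≤ LinearMap.range Xt.mulVecLin := by
    rintro z ⟨x, rfl⟩
    exact ⟨Vs *ᵥ x, by rw [Matrix.mulVecLin_apply, Matrix.mulVecLin_apply, mulVec_mulVec]⟩
  have hfr : Xt.rank ≤ (Xt * Vs).rank := by omega
  have heq : LinearMap.range (Xt * Vs).mulVecLin = LinearMap.range Xt.mulVecLin :=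
    Submodule.eq_of_le_of_finrank_le hsub hfr
  have hcol : ∀ j, ∃ k, (Xt * Vs) *ᵥ k = Xtᵀ j := by
    intro j
    have hmem : Xtᵀ j ∈ LinearMap.range Xt.mulVecLin :=
      ⟨Pi.single j 1, by rw [Matrix.mulVecLin_apply, mulVec_single_one]; rfl⟩
    rw [← heq] at hmem
    obtain ⟨k, hk⟩ := hmem
    exact ⟨k, by rw [← Matrix.mulVecLin_apply]; exact hk⟩
  choose k hk using hcol
  set K : Matrix (Fin r) (Fin n₂) ℝ := Matrix.of fun i j => k j i with hK
  have hXtK : Xt = (Xt * Vs) * K := by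
    ext i j
    rw [Matrix.mul_apply]
    have h1 := congrFun (hk j) i
    simp only [Matrix.mulVec, dotProduct, Matrix.transpose_apply] at h1
    rw [← h1]
    rfl
  have hUsXt : Usᵀ * Xt = (Usᵀ * Xt * Vs) * K := by
    conv_lhs => rw [hXtK]
    simp only [Matrix.mul_assoc]
  have hdet := (Matrix.isUnit_iff_isUnit_det _).1 hB
  have hKeq : K = (Usᵀ * Xt * Vs)⁻¹ * (Usᵀ * Xt) := by
    have h2 : (Usᵀ * Xt * Vs)⁻¹ * (Usᵀ * Xt) = (Usᵀ * Xt * Vs)⁻¹ * ((Usᵀ * Xt * Vs) * K) := by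
      rw [← hUsXt]
    rw [← Matrix.mul_assoc ((Usᵀ * Xt * Vs)⁻¹) (Usᵀ * Xt * Vs) K, Matrix.nonsing_inv_mul _ hdet, Matrix.one_mul] at h2
    exact h2.symm
  rw [Matrix.mul_assoc, ← hKeq, ← hXtK]


lemma sq_le_of_le_sqrt {x F : ℝ} (hx : 0 ≤ x) (hF : 0 ≤ F) (h : x ≤ Real.sqrt F) :
    x ^ 2 ≤ F := by
  have h2 := Real.sq_sqrt hF
  nlinarith [Real.sqrt_nonneg F]

lemma chain_mul {c T M A Q : ℝ} (hM : 0 ≤ M) (hQ : 0 ≤ Q) (hc : 0 ≤ c)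
    (h1 : T ≤ M * Q) (h2 : c * Q ≤ A) : c * T ≤ M * A := by nlinarith

lemma scalar_final {t a b δ sr F2 : ℝ} (ht0 : 0 ≤ t) (ha0 : 0 ≤ a) (hb0 : 0 ≤ b)
    (hδ0 : 0 ≤ δ) (hsr0 : 0 < sr) (hδsr : δ < sr)
    (h5 : t * (sr - δ) ≤ a * b) (h2py : a ^ 2 + b ^ 2 + t ^ 2 ≤ F2) (hδF : δ ^ 2 ≤ F2) :
    t * sr ≤ F2 := by
  by_contra hcon
  push_neg at hcon
  have hF2nn : 0 ≤ F2 := le_trans (by positivity) h2py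
  have htpos : 0 < t := by nlinarith
  have e1 : 2 * t * sr - 2 * t * δ ≤ a ^ 2 + b ^ 2 := by nlinarith [sq_nonneg (a - b)]
  have e2 : sr + t < 2 * δ := by nlinarith
  have e3 : (sr + t) ^ 2 < 4 * δ ^ 2 := by
    nlinarith [mul_pos (by linarith : (0:ℝ) < 2 * δ - (sr + t))
      (by linarith : (0:ℝ) < 2 * δ + (sr + t))]
  nlinarith [sq_nonneg (sr - t)]

end Stmt12


open Stmt12

theorem stmt_12 {n₁ n₂ r : ℕ}
    (Xt Xs : Matrix (Fin n₁) (Fin n₂) ℝ) (hXt : Xt.rank = r)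
    (Us : Matrix (Fin n₁) (Fin r) ℝ) (Vs : Matrix (Fin n₂) (Fin r) ℝ)
    (hUs : Usᵀ * Us = 1) (hVs : Vsᵀ * Vs = 1)
    (σ : Fin r → ℝ) (hσ : ∀ i, 0 < σ i)
    (hXs : Xs = Us * Matrix.diagonal σ * Vsᵀ)
    (sr : ℝ) (hsr : ∀ i, sr ≤ σ i) (hatt : ∃ i, σ i = sr)
    (hclose : specNorm (Xt - Xs) < sr) :
    frobNorm ((1 - Us * Usᵀ) * Xt * (1 - Vs * Vsᵀ)) ≤
      (frobNorm (Xt - Xs)) ^ 2 / sr := by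
  classical
  have hδ0 : 0 ≤ specNorm (Xt - Xs) := norm_nonneg _
  obtain ⟨i0, hi0⟩ := hatt
  have hsr0 : 0 < sr := hi0 ▸ hσ i0
  have hcpos : 0 < sr - specNorm (Xt - Xs) := by linarith
  have hXtsum : Xt = Xs + (Xt - Xs) := by abel
  -- opb bound for the compressed error
  have hopbE : opb (specNorm (Xt - Xs)) (Usᵀ * (Xt - Xs) * Vs) := by
    intro x
    have h1 : (Usᵀ * (Xt - Xs) * Vs) *ᵥ x = Usᵀ *ᵥ ((Xt - Xs) *ᵥ (Vs *ᵥ x)) := by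
      rw [mulVec_mulVec, mulVec_mulVec]
    rw [h1]
    calc qv (Usᵀ *ᵥ ((Xt - Xs) *ᵥ (Vs *ᵥ x)))
        ≤ qv ((Xt - Xs) *ᵥ (Vs *ᵥ x)) := coisometry_qv hUs _
      _ ≤ specNorm (Xt - Xs) ^ 2 * qv (Vs *ᵥ x) := opb_spec (Xt - Xs) _
      _ = specNorm (Xt - Xs) ^ 2 * qv x := by rw [isometry_qv hVs]
  -- B = D + E
  have hUsXsVs : Usᵀ * Xs * Vs = Matrix.diagonal σ := by
    rw [hXs]
    calc Usᵀ * (Us * Matrix.diagonal σ * Vsᵀ) * Vs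
        = (Usᵀ * Us) * (Matrix.diagonal σ * (Vsᵀ * Vs)) := by
          simp only [Matrix.mul_assoc]
      _ = Matrix.diagonal σ := by rw [hUs, hVs, Matrix.one_mul, Matrix.mul_one]
  have hBsplit : Usᵀ * Xt * Vs = Matrix.diagonal σ + Usᵀ * (Xt - Xs) * Vs := by
    have h1 : Usᵀ * (Xt - Xs) * Vs = Usᵀ * Xt * Vs - Usᵀ * Xs * Vs := by
      rw [Matrix.mul_sub, Matrix.sub_mul]
    rw [h1, hUsXsVs]; abel
  have hlow : ∀ y, (sr - specNorm (Xt - Xs)) ^ 2 * qv y ≤ qv ((Usᵀ * Xt * Vs) *ᵥ y) := by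
    intro y
    rw [hBsplit]
    exact lower_bound_add hδ0 (le_of_lt hclose) (diag_lower σ sr hsr0.le hsr) hopbE y
  obtain ⟨hBunit, hopbInv⟩ := inv_lower hcpos hlow
  -- zero identities
  have hPXs : (1 - Us * Usᵀ) * Xs = 0 := by
    rw [hXs, Matrix.sub_mul, Matrix.one_mul]
    have h1 : Us * Usᵀ * (Us * Matrix.diagonal σ * Vsᵀ) = Us * Matrix.diagonal σ * Vsᵀ := by
      calc Us * Usᵀ * (Us * Matrix.diagonal σ * Vsᵀ)
          = Us * ((Usᵀ * Us) * (Matrix.diagonal σ * Vsᵀ)) := by simp only [Matrix.mul_assoc]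
        _ = Us * (Matrix.diagonal σ * Vsᵀ) := by rw [hUs, Matrix.one_mul]
        _ = Us * Matrix.diagonal σ * Vsᵀ := by rw [Matrix.mul_assoc]
    rw [h1, sub_self]
  have hXsQ : Xs * (1 - Vs * Vsᵀ) = 0 := by
    rw [hXs, Matrix.mul_sub, Matrix.mul_one]
    have h1 : Us * Matrix.diagonal σ * Vsᵀ * (Vs * Vsᵀ) = Us * Matrix.diagonal σ * Vsᵀ := by
      calc Us * Matrix.diagonal σ * Vsᵀ * (Vs * Vsᵀ)
          = Us * (Matrix.diagonal σ * ((Vsᵀ * Vs) * Vsᵀ)) := by simp only [Matrix.mul_assoc]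
        _ = Us * (Matrix.diagonal σ * Vsᵀ) := by rw [hVs, Matrix.one_mul]
        _ = Us * Matrix.diagonal σ * Vsᵀ := by rw [Matrix.mul_assoc]
    rw [h1, sub_self]
  -- factorization
  have hfact := rank_factor Xt hXt Us Vs hBunit
  have hPXtVs : (1 - Us * Usᵀ) * (Xt * Vs) = (1 - Us * Usᵀ) * (Xt - Xs) * Vs := by
    have h1 : (1 - Us * Usᵀ) * (Xt - Xs) = (1 - Us * Usᵀ) * Xt := by
      rw [Matrix.mul_sub, hPXs, sub_zero]
    rw [h1, Matrix.mul_assoc]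
  have hUsXtQ : (Usᵀ * Xt) * (1 - Vs * Vsᵀ) = Usᵀ * (Xt - Xs) * (1 - Vs * Vsᵀ) := by
    have h1 : Usᵀ * (Xt - Xs) = Usᵀ * Xt - Usᵀ * Xs := by rw [Matrix.mul_sub]
    rw [h1, Matrix.sub_mul, Matrix.mul_assoc Usᵀ Xs (1 - Vs * Vsᵀ), hXsQ,
      Matrix.mul_zero, sub_zero]
  have hT : (1 - Us * Usᵀ) * Xt * (1 - Vs * Vsᵀ)
      = ((1 - Us * Usᵀ) * (Xt - Xs) * Vs)
        * ((Usᵀ * Xt * Vs)⁻¹ * (Usᵀ * (Xt - Xs) * (1 - Vs * Vsᵀ))) := by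
    calc (1 - Us * Usᵀ) * Xt * (1 - Vs * Vsᵀ)
        = (1 - Us * Usᵀ) * (Xt * Vs * (Usᵀ * Xt * Vs)⁻¹ * (Usᵀ * Xt)) * (1 - Vs * Vsᵀ) := by
          rw [← hfact]
      _ = ((1 - Us * Usᵀ) * (Xt * Vs))
          * ((Usᵀ * Xt * Vs)⁻¹ * ((Usᵀ * Xt) * (1 - Vs * Vsᵀ))) := by
          simp only [Matrix.mul_assoc]
      _ = ((1 - Us * Usᵀ) * (Xt - Xs) * Vs)
          * ((Usᵀ * Xt * Vs)⁻¹ * (Usᵀ * (Xt - Xs) * (1 - Vs * Vsᵀ))) := by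
          rw [hPXtVs, hUsXtQ]
  -- Pythagoras
  have hPΔQ : (1 - Us * Usᵀ) * (Xt - Xs) * (1 - Vs * Vsᵀ)
      = (1 - Us * Usᵀ) * Xt * (1 - Vs * Vsᵀ) := by
    have h1 : (1 - Us * Usᵀ) * (Xt - Xs) = (1 - Us * Usᵀ) * Xt := by
      rw [Matrix.mul_sub, hPXs, sub_zero]
    rw [h1]
  have hsplit1 : qm (Xt - Xs)
      = qm ((Xt - Xs) * Vs) + qm ((Xt - Xs) * (1 - Vs * Vsᵀ)) := col_split hVs _
  have hsplit2 : qm ((Xt - Xs) * (1 - Vs * Vsᵀ))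
      = qm (Usᵀ * (Xt - Xs) * (1 - Vs * Vsᵀ))
        + qm ((1 - Us * Usᵀ) * Xt * (1 - Vs * Vsᵀ)) := by
    rw [row_split hUs ((Xt - Xs) * (1 - Vs * Vsᵀ)), ← Matrix.mul_assoc, ← Matrix.mul_assoc,
      hPΔQ]
  have hsplit3 : qm ((Xt - Xs) * Vs)
      = qm (Usᵀ * (Xt - Xs) * Vs) + qm ((1 - Us * Usᵀ) * (Xt - Xs) * Vs) := by
    rw [row_split hUs ((Xt - Xs) * Vs), ← Matrix.mul_assoc, ← Matrix.mul_assoc]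
  have hpyth : qm ((1 - Us * Usᵀ) * (Xt - Xs) * Vs)
      + qm (Usᵀ * (Xt - Xs) * (1 - Vs * Vsᵀ))
      + qm ((1 - Us * Usᵀ) * Xt * (1 - Vs * Vsᵀ)) ≤ qm (Xt - Xs) := by
    have h0 : 0 ≤ qm (Usᵀ * (Xt - Xs) * Vs) := qm_nonneg _
    linarith [hsplit1, hsplit2, hsplit3]
  -- bound on the corner
  have hbound : (sr - specNorm (Xt - Xs)) ^ 2 * qm ((1 - Us * Usᵀ) * Xt * (1 - Vs * Vsᵀ))
      ≤ qm ((1 - Us * Usᵀ) * (Xt - Xs) * Vs) * qm (Usᵀ * (Xt - Xs) * (1 - Vs * Vsᵀ)) := by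
    have h1 : qm ((1 - Us * Usᵀ) * Xt * (1 - Vs * Vsᵀ))
        ≤ qm ((1 - Us * Usᵀ) * (Xt - Xs) * Vs)
          * qm ((Usᵀ * Xt * Vs)⁻¹ * (Usᵀ * (Xt - Xs) * (1 - Vs * Vsᵀ))) := by
      rw [hT]; exact qm_mul_le _ _
    have h2 : (sr - specNorm (Xt - Xs)) ^ 2
        * qm ((Usᵀ * Xt * Vs)⁻¹ * (Usᵀ * (Xt - Xs) * (1 - Vs * Vsᵀ)))
        ≤ qm (Usᵀ * (Xt - Xs) * (1 - Vs * Vsᵀ)) := low_qm_left hopbInv _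
    exact chain_mul (qm_nonneg ((1 - Us * Usᵀ) * (Xt - Xs) * Vs))
      (qm_nonneg ((Usᵀ * Xt * Vs)⁻¹ * (Usᵀ * (Xt - Xs) * (1 - Vs * Vsᵀ))))
      (sq_nonneg (sr - specNorm (Xt - Xs))) h1 h2
  -- spectral vs Frobenius
  have hδF : specNorm (Xt - Xs) ^ 2 ≤ qm (Xt - Xs) := by
    have h := spec_le_frob (Xt - Xs)
    rw [frob_eq_qm] at h
    exact sq_le_of_le_sqrt hδ0 (qm_nonneg (Xt - Xs)) h
  -- scalar endgame
  have h5 : Real.sqrt (qm ((1 - Us * Usᵀ) * Xt * (1 - Vs * Vsᵀ))) * (sr - specNorm (Xt - Xs))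
      ≤ Real.sqrt (qm (Usᵀ * (Xt - Xs) * (1 - Vs * Vsᵀ)))
        * Real.sqrt (qm ((1 - Us * Usᵀ) * (Xt - Xs) * Vs)) := by
    refine le_of_sq_le_sq (mul_nonneg (Real.sqrt_nonneg _) (Real.sqrt_nonneg _)) ?_
    rw [mul_pow, mul_pow, Real.sq_sqrt (qm_nonneg _), Real.sq_sqrt (qm_nonneg _),
      Real.sq_sqrt (qm_nonneg _)]
    calc qm ((1 - Us * Usᵀ) * Xt * (1 - Vs * Vsᵀ)) * (sr - specNorm (Xt - Xs)) ^ 2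
        = (sr - specNorm (Xt - Xs)) ^ 2 * qm ((1 - Us * Usᵀ) * Xt * (1 - Vs * Vsᵀ)) := by ring
      _ ≤ qm ((1 - Us * Usᵀ) * (Xt - Xs) * Vs) * qm (Usᵀ * (Xt - Xs) * (1 - Vs * Vsᵀ)) := hbound
      _ = qm (Usᵀ * (Xt - Xs) * (1 - Vs * Vsᵀ)) * qm ((1 - Us * Usᵀ) * (Xt - Xs) * Vs) := by
          ring
  have h2py : Real.sqrt (qm (Usᵀ * (Xt - Xs) * (1 - Vs * Vsᵀ))) ^ 2
      + Real.sqrt (qm ((1 - Us * Usᵀ) * (Xt - Xs) * Vs)) ^ 2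
      + Real.sqrt (qm ((1 - Us * Usᵀ) * Xt * (1 - Vs * Vsᵀ))) ^ 2 ≤ qm (Xt - Xs) := by
    rw [Real.sq_sqrt (qm_nonneg _), Real.sq_sqrt (qm_nonneg _), Real.sq_sqrt (qm_nonneg _)]
    linarith [hpyth]
  have hmain := scalar_final (Real.sqrt_nonneg (qm ((1 - Us * Usᵀ) * Xt * (1 - Vs * Vsᵀ))))
    (Real.sqrt_nonneg (qm (Usᵀ * (Xt - Xs) * (1 - Vs * Vsᵀ))))
    (Real.sqrt_nonneg (qm ((1 - Us * Usᵀ) * (Xt - Xs) * Vs)))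
    hδ0 hsr0 hclose h5 h2py hδF
  rw [frob_eq_qm, frob_eq_qm, Real.sq_sqrt (qm_nonneg (Xt - Xs)), le_div_iff₀ hsr0]
  exact hmain
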